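/- Let L ⊆ K be a support and σ a strategy of player 1 such that γ₁(δ',σ,τ) = 1 for every initial distribution δ' whose support is contained in L and every strategy τ of player 2. Then there exists N ∈ ℕ such that for every initial distribution δ with support L and every strategy τ of player 2, the probability under δ, σ, τ that a play of length N visits T is at least 1/2. -/

import Mathlib

open scoped Classical

noncomputable section

/-- A probability distribution on a finite type, given by a nonnegative
real-valued density summing to `1`. -/
structure FDist (X : Type*) [Fintype X] where
  f : X → ℝ
  nonneg : ∀ x, 0 ≤ f x
  sum_one : ∑ x, f x = 1

/-- The support of a distribution: the set of points with positive probability. -/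
def FDist.support {X : Type*} [Fintype X] (δ : FDist X) : Finset X :=
  Finset.univ.filter fun x => 0 < δ.f x

/-- The uniform distribution on a nonempty finite set. -/
def uniform {X : Type*} [Fintype X] (L : Finset X) (hL : L.Nonempty) : FDist X where
  f x := if x ∈ L then (L.card : ℝ)⁻¹ else 0
  nonneg x := by split_ifs <;> positivity
  sum_one := by
    rw [Finset.sum_ite_mem, Finset.univ_inter, Finset.sum_const, nsmul_eq_mul,
      mul_inv_cancel₀]
    exact_mod_cast (Finset.card_pos.mpr hL).ne'

/-- Uniform distribution on `L`, defaulting to the uniform distribution on the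
whole type when `L` is empty. -/
def uniformD {X : Type*} [Fintype X] [Nonempty X] (L : Finset X) : FDist X :=
  if h : L.Nonempty then uniform L h else uniform Finset.univ Finset.univ_nonempty

/-- The Dirac distribution on a point. -/
def dirac {X : Type*} [Fintype X] (x : X) : FDist X where
  f y := if y = x then 1 else 0
  nonneg y := by by_cases h : y = x <;> simp [h]
  sum_one := by simp

/-- A stochastic game with partial observation on both sides and a reachability
objective for player 1: states `K`, actions `I`, `J`, signals `C`, `D`, target
states `T`, transition probabilities `p`, and actions encoded in signals via
`act₁`, `act₂`. -/
structure Game (K I J C D : Type*) [Fintype K] [Fintype I] [Fintype J] [Fintype C] [Fintype D] where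
  T : Finset K
  p : K → I → J → C × D × K → ℝ
  p_nonneg : ∀ k i j x, 0 ≤ p k i j x
  p_sum : ∀ k i j, ∑ x : C × D × K, p k i j x = 1
  act₁ : C → I
  act₂ : D → J
  act_compat : ∀ k i j c d l, 0 < p k i j (c, d, l) → i = act₁ c ∧ j = act₂ d

/-- A (behavioral) strategy of player 1: a distribution on actions for each
finite sequence of received signals. -/
abbrev Strategy1 (I C : Type*) [Fintype I] : Type _ := List C → FDist I

/-- A (behavioral) strategy of player 2. -/
abbrev Strategy2 (J D : Type*) [Fintype J] : Type _ := List D → FDist J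

/-- A play with `n+1` states: the initial state followed by `n` steps, each
consisting of a signal for player 1, a signal for player 2 and the next state. -/
structure Hist (K C D : Type*) (n : ℕ) where
  first : K
  steps : Fin n → C × D × K

instance (K C D : Type*) [Fintype K] [Fintype C] [Fintype D] (n : ℕ) :
    Fintype (Hist K C D n) :=
  Fintype.ofEquiv (K × (Fin n → C × D × K))
    { toFun := fun x => ⟨x.1, x.2⟩
      invFun := fun h => (h.first, h.steps)
      left_inv := fun _ => rfl
      right_inv := fun _ => rfl }

namespace Hist

variable {K C D : Type*}

/-- The last state of a play. -/
def last : ∀ {n : ℕ}, Hist K C D n → K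
  | 0, h => h.first
  | n + 1, h => (h.steps (Fin.last n)).2.2

/-- The play obtained by removing the last step. -/
def init {n : ℕ} (h : Hist K C D (n + 1)) : Hist K C D n :=
  ⟨h.first, fun m => h.steps m.castSucc⟩

/-- The `m`-th state of a play, `0`-indexed: `state h 0` is the initial state
(called `k₁` in `1`-indexed notation). -/
def state {n : ℕ} (h : Hist K C D n) (m : Fin (n + 1)) : K :=
  if hm : m.val = 0 then h.first
  else (h.steps ⟨m.val - 1, by have := m.isLt; omega⟩).2.2

/-- The sequence of signals received by player 1 along the play. -/
def sig1 {n : ℕ} (h : Hist K C D n) : List C := List.ofFn fun m => (h.steps m).1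

/-- The sequence of signals received by player 2 along the play. -/
def sig2 {n : ℕ} (h : Hist K C D n) : List D := List.ofFn fun m => (h.steps m).2.1

/-- The play visits the target set `T`. -/
def visits (T : Finset K) {n : ℕ} (h : Hist K C D n) : Prop :=
  ∃ m : Fin (n + 1), h.state m ∈ T

end Hist

namespace Game

variable {K I J C D : Type*} [Fintype K] [Fintype I] [Fintype J] [Fintype C] [Fintype D]

/-- The probability of a given play of `n` steps, under initial distribution `δ`
and strategies `σ`, `τ`. -/
def playProb (G : Game K I J C D) (δ : FDist K) (σ : Strategy1 I C) (τ : Strategy2 J D) :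
    ∀ n : ℕ, Hist K C D n → ℝ
  | 0, h => δ.f h.first
  | n + 1, h =>
      G.playProb δ σ τ n h.init *
        ∑ i : I, ∑ j : J,
          (σ h.init.sig1).f i * (τ h.init.sig2).f j *
            G.p h.init.last i j (h.steps (Fin.last n))

/-- The probability that a play with `n+1` states visits the target set. -/
def reachProb (G : Game K I J C D) (δ : FDist K) (σ : Strategy1 I C)
    (τ : Strategy2 J D) (n : ℕ) : ℝ :=
  ∑ h : Hist K C D n, if h.visits G.T then G.playProb δ σ τ n h else 0

/-- The reachability probability `γ₁(δ,σ,τ)`: the supremum over horizons of the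
probability that the play visits the target set. -/
def val (G : Game K I J C D) (δ : FDist K) (σ : Strategy1 I C) (τ : Strategy2 J D) : ℝ :=
  ⨆ n : ℕ, G.reachProb δ σ τ n

/-- `δ` is almost-surely winning for player 1. -/
def AlmostSureWin1 (G : Game K I J C D) (δ : FDist K) : Prop :=
  ∃ σ, ∀ τ, G.val δ σ τ = 1

/-- `δ` is positively winning for player 1. -/
def PositiveWin1 (G : Game K I J C D) (δ : FDist K) : Prop :=
  ∃ σ, ∀ τ, 0 < G.val δ σ τ

/-- `δ` is positively winning for player 2. -/
def PositiveWin2 (G : Game K I J C D) (δ : FDist K) : Prop :=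
  ∃ τ, ∀ σ, G.val δ σ τ < 1

/-- `δ` is surely (equivalently here, almost-surely) winning for player 2. -/
def SureWin2 (G : Game K I J C D) (δ : FDist K) : Prop :=
  ∃ τ, ∀ σ, G.val δ σ τ = 0

/-- One-step belief operator of player 1. -/
def B1 (G : Game K I J C D) (L : Finset K) (c : C) : Finset K :=
  Finset.univ.filter fun k => ∃ l ∈ L, ∃ d : D, 0 < G.p l (G.act₁ c) (G.act₂ d) (c, d, k)

/-- One-step belief operator of player 2. -/
def B2 (G : Game K I J C D) (L : Finset K) (d : D) : Finset K :=
  Finset.univ.filter fun k => ∃ l ∈ L, ∃ c : C, 0 < G.p l (G.act₁ c) (G.act₂ d) (c, d, k)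

/-- Belief of player 1 after a sequence of signals. -/
def B1seq (G : Game K I J C D) (L : Finset K) (cs : List C) : Finset K := cs.foldl G.B1 L

/-- Belief of player 2 after a sequence of signals. -/
def B2seq (G : Game K I J C D) (L : Finset K) (ds : List D) : Finset K := ds.foldl G.B2 L

/-- One-step pessimistic belief operator of player 1. -/
def B1p (G : Game K I J C D) (L : Finset K) (c : C) : Finset K := G.B1 (L \ G.T) c

/-- One-step pessimistic belief operator of player 2. -/
def B2p (G : Game K I J C D) (L : Finset K) (d : D) : Finset K := G.B2 (L \ G.T) d

/-- Pessimistic belief of player 1 after a sequence of signals. -/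
def B1pseq (G : Game K I J C D) (L : Finset K) (cs : List C) : Finset K := cs.foldl G.B1p L

/-- Pessimistic belief of player 2 after a sequence of signals. -/
def B2pseq (G : Game K I J C D) (L : Finset K) (ds : List D) : Finset K := ds.foldl G.B2p L

/-- The operator `Φ` on collections of subsets of `K ∖ T`. -/
def Phi (G : Game K I J C D) (𝓛 : Set (Finset K)) : Set (Finset K) :=
  {L | L ∈ 𝓛 ∧ L ∩ G.T = ∅ ∧ ∃ j : J, ∀ d : D, G.act₂ d = j → G.B2 L d ∈ 𝓛}

theorem Phi_mono (G : Game K I J C D) : Monotone G.Phi := by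
  intro A B hAB L hL
  obtain ⟨h1, h2, j, hj⟩ := hL
  exact ⟨hAB h1, h2, j, fun d hd => hAB (hj d hd)⟩

/-- `𝓛_∞`, the greatest fixpoint of `Φ`. -/
def Linf (G : Game K I J C D) : Set (Finset K) :=
  OrderHom.gfp ⟨G.Phi, G.Phi_mono⟩

/-- The winning condition of the `𝓛`-game for player 1, on a play with initial
support `L`: some state `k_m` is a target state and all earlier pessimistic
beliefs of player 1 avoid `𝓛`. -/
def LWin (G : Game K I J C D) (𝓛 : Set (Finset K)) (L : Finset K) {n : ℕ}
    (h : Hist K C D n) : Prop :=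
  ∃ m : Fin (n + 1), h.state m ∈ G.T ∧
    ∀ r : ℕ, 1 ≤ r → r ≤ m.val → G.B1pseq L (h.sig1.take r) ∉ 𝓛

/-- The payoff `γ₁^𝓛(δ,σ,τ)` of player 1 in the `𝓛`-game, for an initial
distribution `δ` with support `L`. -/
def Lval (G : Game K I J C D) (𝓛 : Set (Finset K)) (L : Finset K) (δ : FDist K)
    (σ : Strategy1 I C) (τ : Strategy2 J D) : ℝ :=
  ⨆ n : ℕ, ∑ h : Hist K C D n, if G.LWin 𝓛 L h then G.playProb δ σ τ n h else 0

end Game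

/-- The uniformly random strategy `σ_R` of player 1. -/
def randomStrat (I C : Type*) [Fintype I] [Nonempty I] : Strategy1 I C :=
  fun _ => uniform Finset.univ Finset.univ_nonempty
variable {K I J C D : Type*} [Fintype K] [Fintype I] [Fintype J] [Fintype C] [Fintype D]
  [Nonempty K] [Nonempty I] [Nonempty J] [Nonempty C] [Nonempty D]

section Aux

variable {K I J C D : Type*} [Fintype K] [Fintype I] [Fintype J] [Fintype C] [Fintype D]

/-- Equivalence between plays of length `n+1` and pairs (play of length `n`, last step). -/
def histEquiv (K C D : Type*) (n : ℕ) : Hist K C D (n+1) ≃ Hist K C D n × (C × D × K) where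
  toFun h := (h.init, h.steps (Fin.last n))
  invFun g := ⟨g.1.first, Fin.snoc g.1.steps g.2⟩
  left_inv h := by
    obtain ⟨f, s⟩ := h
    simp only [Hist.init, Hist.mk.injEq, true_and]
    funext m
    induction m using Fin.lastCases with
    | last => simp
    | cast m => simp
  right_inv g := by
    obtain ⟨⟨f, s⟩, x⟩ := g
    simp only [Hist.init, Fin.snoc_last, Prod.mk.injEq, Hist.mk.injEq, true_and, and_true]
    funext m
    simp

/-- The one-step transition weight. -/
def step (G : Game K I J C D) (σ : Strategy1 I C) (τ : Strategy2 J D) {n : ℕ}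
    (g : Hist K C D n) (x : C × D × K) : ℝ :=
  ∑ i : I, ∑ j : J, (σ g.sig1).f i * (τ g.sig2).f j * G.p g.last i j x

lemma step_nonneg (G : Game K I J C D) (σ : Strategy1 I C) (τ : Strategy2 J D) {n : ℕ}
    (g : Hist K C D n) (x : C × D × K) : 0 ≤ step G σ τ g x := by
  refine Finset.sum_nonneg fun i _ => Finset.sum_nonneg fun j _ => ?_
  exact mul_nonneg (mul_nonneg ((σ g.sig1).nonneg i) ((τ g.sig2).nonneg j)) (G.p_nonneg _ _ _ _)

lemma sum_step (G : Game K I J C D) (σ : Strategy1 I C) (τ : Strategy2 J D) {n : ℕ}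
    (g : Hist K C D n) : ∑ x : C × D × K, step G σ τ g x = 1 := by
  unfold step
  rw [Finset.sum_comm]
  have : ∀ i : I, ∑ x : C × D × K, ∑ j : J,
      (σ g.sig1).f i * (τ g.sig2).f j * G.p g.last i j x = (σ g.sig1).f i := by
    intro i
    rw [Finset.sum_comm]
    have : ∀ j : J, ∑ x : C × D × K,
        (σ g.sig1).f i * (τ g.sig2).f j * G.p g.last i j x
        = (σ g.sig1).f i * (τ g.sig2).f j := by
      intro j
      rw [← Finset.mul_sum, G.p_sum, mul_one]
    rw [Finset.sum_congr rfl fun j _ => this j, ← Finset.mul_sum, (τ g.sig2).sum_one, mul_one]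
  rw [Finset.sum_congr rfl fun i _ => this i, (σ g.sig1).sum_one]

lemma playProb_succ (G : Game K I J C D) (δ : FDist K) (σ : Strategy1 I C)
    (τ : Strategy2 J D) {n : ℕ} (h : Hist K C D (n+1)) :
    G.playProb δ σ τ (n+1) h = G.playProb δ σ τ n h.init * step G σ τ h.init (h.steps (Fin.last n)) := rfl

lemma playProb_nonneg (G : Game K I J C D) (δ : FDist K) (σ : Strategy1 I C)
    (τ : Strategy2 J D) : ∀ (n : ℕ) (h : Hist K C D n), 0 ≤ G.playProb δ σ τ n h := by
  intro n
  induction n with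
  | zero => exact fun h => δ.nonneg _
  | succ n ih =>
    intro h
    exact mul_nonneg (ih _) (step_nonneg _ _ _ _ _)

/-- Plays of length 0 are just states. -/
def histEquiv0 (K C D : Type*) : Hist K C D 0 ≃ K where
  toFun h := h.first
  invFun k := ⟨k, Fin.elim0⟩
  left_inv h := by
    obtain ⟨f, s⟩ := h
    simp only [Hist.mk.injEq, true_and]
    funext m; exact m.elim0
  right_inv k := rfl

lemma sum_hist_succ {n : ℕ} (f : Hist K C D (n+1) → ℝ) :
    ∑ h : Hist K C D (n+1), f h
      = ∑ g : Hist K C D n, ∑ x : C × D × K, f ((histEquiv K C D n).symm (g, x)) := by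
  rw [Fintype.sum_equiv (histEquiv K C D n) f (fun p => f ((histEquiv K C D n).symm p))
    (fun h => by simp), Fintype.sum_prod_type]

lemma init_symm {n : ℕ} (g : Hist K C D n) (x : C × D × K) :
    ((histEquiv K C D n).symm (g, x)).init = g :=
  congrArg Prod.fst ((histEquiv K C D n).right_inv (g, x))

lemma steps_last_symm {n : ℕ} (g : Hist K C D n) (x : C × D × K) :
    ((histEquiv K C D n).symm (g, x)).steps (Fin.last n) = x :=
  congrArg Prod.snd ((histEquiv K C D n).right_inv (g, x))

lemma playProb_symm (G : Game K I J C D) (δ : FDist K) (σ : Strategy1 I C)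
    (τ : Strategy2 J D) {n : ℕ} (g : Hist K C D n) (x : C × D × K) :
    G.playProb δ σ τ (n+1) ((histEquiv K C D n).symm (g, x))
      = G.playProb δ σ τ n g * step G σ τ g x := by
  rw [playProb_succ, init_symm, steps_last_symm]

lemma sum_playProb (G : Game K I J C D) (δ : FDist K) (σ : Strategy1 I C)
    (τ : Strategy2 J D) : ∀ n : ℕ, ∑ h : Hist K C D n, G.playProb δ σ τ n h = 1 := by
  intro n
  induction n with
  | zero =>
    rw [← δ.sum_one]
    exact Fintype.sum_equiv (histEquiv0 K C D) _ _ fun h => rfl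
  | succ n ih =>
    rw [sum_hist_succ]
    calc ∑ g : Hist K C D n, ∑ x : C × D × K,
          G.playProb δ σ τ (n+1) ((histEquiv K C D n).symm (g, x))
        = ∑ g : Hist K C D n, G.playProb δ σ τ n g := by
          refine Finset.sum_congr rfl fun g _ => ?_
          rw [Finset.sum_congr rfl fun x _ => playProb_symm G δ σ τ g x,
            ← Finset.mul_sum, sum_step, mul_one]
      _ = 1 := ih

lemma visits_init {n : ℕ} {T : Finset K} (h : Hist K C D (n+1)) (hv : h.init.visits T) :
    h.visits T := by
  obtain ⟨m, hm⟩ := hv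
  refine ⟨m.castSucc, ?_⟩
  unfold Hist.state at hm ⊢
  rcases Nat.eq_zero_or_pos m.val with h0 | h0
  · simp only [Fin.coe_castSucc, h0, dif_pos] at hm ⊢
    exact hm
  · simp only [Fin.coe_castSucc, Nat.pos_iff_ne_zero.mp h0, dif_neg, Hist.init] at hm ⊢
    convert hm using 3
    rfl

lemma reachProb_le_succ (G : Game K I J C D) (δ : FDist K) (σ : Strategy1 I C)
    (τ : Strategy2 J D) (n : ℕ) :
    G.reachProb δ σ τ n ≤ G.reachProb δ σ τ (n+1) := by
  unfold Game.reachProb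
  have key : ∑ h : Hist K C D (n+1),
      (if h.init.visits G.T then G.playProb δ σ τ (n+1) h else 0)
      = ∑ h : Hist K C D n, if h.visits G.T then G.playProb δ σ τ n h else 0 := by
    rw [sum_hist_succ]
    refine Finset.sum_congr rfl fun g _ => ?_
    rw [Finset.sum_congr rfl fun x _ => by rw [init_symm, playProb_symm]]
    by_cases hv : g.visits G.T
    · simp only [if_pos hv, ← Finset.mul_sum, sum_step, mul_one]
    · simp [if_neg hv]
  rw [← key]
  refine Finset.sum_le_sum fun h _ => ?_
  by_cases hv : h.init.visits G.T
  · rw [if_pos hv, if_pos (visits_init h hv)]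
  · rw [if_neg hv]
    split_ifs with h'
    · exact playProb_nonneg G δ σ τ _ h
    · exact le_rfl

lemma reachProb_mono (G : Game K I J C D) (δ : FDist K) (σ : Strategy1 I C)
    (τ : Strategy2 J D) : Monotone (G.reachProb δ σ τ) :=
  monotone_nat_of_le_succ (reachProb_le_succ G δ σ τ)

lemma reachProb_nonneg (G : Game K I J C D) (δ : FDist K) (σ : Strategy1 I C)
    (τ : Strategy2 J D) (n : ℕ) : 0 ≤ G.reachProb δ σ τ n :=
  Finset.sum_nonneg fun h _ => by
    split_ifs
    · exact playProb_nonneg G δ σ τ n h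
    · exact le_refl 0

lemma reachProb_le_one (G : Game K I J C D) (δ : FDist K) (σ : Strategy1 I C)
    (τ : Strategy2 J D) (n : ℕ) : G.reachProb δ σ τ n ≤ 1 := by
  rw [← sum_playProb G δ σ τ n]
  refine Finset.sum_le_sum fun h _ => ?_
  split_ifs
  · exact le_refl _
  · exact playProb_nonneg G δ σ τ n h

lemma playProb_dirac (G : Game K I J C D) (δ : FDist K) (σ : Strategy1 I C)
    (τ : Strategy2 J D) : ∀ (n : ℕ) (h : Hist K C D n),
    G.playProb δ σ τ n h = δ.f h.first * G.playProb (dirac h.first) σ τ n h := by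
  intro n
  induction n with
  | zero => intro h; simp [Game.playProb, dirac]
  | succ n ih =>
    intro h
    have hfirst : h.init.first = h.first := rfl
    rw [playProb_succ, ih h.init, playProb_succ, hfirst, mul_assoc]

lemma reachProb_linear (G : Game K I J C D) (δ : FDist K) (σ : Strategy1 I C)
    (τ : Strategy2 J D) (n : ℕ) :
    G.reachProb δ σ τ n = ∑ k : K, δ.f k * G.reachProb (dirac k) σ τ n := by
  unfold Game.reachProb
  simp_rw [Finset.mul_sum]
  rw [Finset.sum_comm]
  refine Finset.sum_congr rfl fun h _ => ?_
  by_cases hv : h.visits G.T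
  · simp only [if_pos hv]
    rw [playProb_dirac G δ σ τ n h]
    have : ∀ k : K, G.playProb (dirac k) σ τ n h
        = (if h.first = k then (1:ℝ) else 0) * G.playProb (dirac h.first) σ τ n h := by
      intro k
      rw [playProb_dirac G (dirac k) σ τ n h]
      simp [dirac]
    have h2 : ∑ k : K, δ.f k * G.playProb (dirac k) σ τ n h
        = ∑ k : K, if h.first = k then δ.f k * G.playProb (dirac h.first) σ τ n h else 0 := by
      refine Finset.sum_congr rfl fun k _ => ?_
      rw [this k]
      by_cases hk : h.first = k
      · subst hk; simp
      · simp [hk]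
    rw [h2, Finset.sum_ite_eq, if_pos (Finset.mem_univ _)]
  · simp [if_neg hv]

/-- `playProb` with player 2's behavior given by a raw density `x`. -/
def playProbX (G : Game K I J C D) (δ : FDist K) (σ : Strategy1 I C)
    (x : List D → J → ℝ) : ∀ n : ℕ, Hist K C D n → ℝ
  | 0, h => δ.f h.first
  | n + 1, h =>
      playProbX G δ σ x n h.init *
        ∑ i : I, ∑ j : J,
          (σ h.init.sig1).f i * x h.init.sig2 j *
            G.p h.init.last i j (h.steps (Fin.last n))

lemma playProbX_eq (G : Game K I J C D) (δ : FDist K) (σ : Strategy1 I C)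
    (τ : Strategy2 J D) : ∀ (n : ℕ) (h : Hist K C D n),
    playProbX G δ σ (fun ds => (τ ds).f) n h = G.playProb δ σ τ n h := by
  intro n
  induction n with
  | zero => intro h; rfl
  | succ n ih =>
    intro h
    show playProbX G δ σ _ n h.init * _ = G.playProb δ σ τ n h.init * _
    rw [ih]

lemma continuous_playProbX (G : Game K I J C D) (δ : FDist K) (σ : Strategy1 I C) :
    ∀ (n : ℕ) (h : Hist K C D n),
    Continuous (fun x : List D → J → ℝ => playProbX G δ σ x n h) := by
  intro n
  induction n with
  | zero => intro h; exact continuous_const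
  | succ n ih =>
    intro h
    refine Continuous.mul (ih h.init) ?_
    refine continuous_finset_sum _ fun i _ => continuous_finset_sum _ fun j _ => ?_
    refine Continuous.mul (Continuous.mul continuous_const ?_) continuous_const
    exact (continuous_apply j).comp (continuous_apply h.init.sig2)

/-- `reachProb` with player 2's behavior given by a raw density. -/
def reachX (G : Game K I J C D) (δ : FDist K) (σ : Strategy1 I C)
    (x : List D → J → ℝ) (n : ℕ) : ℝ :=
  ∑ h : Hist K C D n, if h.visits G.T then playProbX G δ σ x n h else 0

lemma reachX_eq (G : Game K I J C D) (δ : FDist K) (σ : Strategy1 I C)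
    (τ : Strategy2 J D) (n : ℕ) :
    reachX G δ σ (fun ds => (τ ds).f) n = G.reachProb δ σ τ n := by
  unfold reachX Game.reachProb
  exact Finset.sum_congr rfl fun h _ => by rw [playProbX_eq]

lemma continuous_reachX (G : Game K I J C D) (δ : FDist K) (σ : Strategy1 I C)
    (n : ℕ) : Continuous (fun x => reachX G δ σ x n) := by
  refine continuous_finset_sum _ fun h _ => ?_
  by_cases hv : h.visits G.T
  · simpa only [if_pos hv] using continuous_playProbX G δ σ n h
  · simpa only [if_neg hv] using continuous_const

end Aux

/-- if `σ` almost-surely wins from every initial distribution whose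
support is contained in `L`, then there is a uniform horizon `N` such that, from
every initial distribution with support `L` and against every strategy of
player 2, a play of length `N` visits the target with probability at least `1/2`. -/
theorem uniform_horizon_of_almostsure (G : Game K I J C D) (L : Finset K)
    (hL : L.Nonempty) (σ : Strategy1 I C)
    (hAS : ∀ δ' : FDist K, δ'.support ⊆ L → ∀ τ : Strategy2 J D, G.val δ' σ τ = 1) :
    ∃ N : ℕ, ∀ δ : FDist K, δ.support = L →
      ∀ τ : Strategy2 J D, (1 : ℝ) / 2 ≤ G.reachProb δ σ τ N := by
  classical
  set m : ℝ := (L.card : ℝ) with hm_def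
  have hm : 0 < m := by
    have := Finset.card_pos.mpr hL
    positivity
  set ε : ℝ := (2 * m)⁻¹ with hε_def
  have hε : 0 < ε := by positivity
  have hmε : m * ε = 1 / 2 := by
    rw [hε_def]
    field_simp
  set δu : FDist K := uniform L hL with hδu_def
  have hδusupp : δu.support ⊆ L := by
    intro k hk
    simp only [FDist.support, Finset.mem_filter, hδu_def, uniform] at hk
    by_contra hkL
    rw [if_neg hkL] at hk
    exact lt_irrefl 0 hk.2
  -- Step 1: a uniform horizon for the uniform distribution.
  have step1 : ∃ N : ℕ, ∀ τ : Strategy2 J D, 1 - ε ≤ G.reachProb δu σ τ N := by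
    by_contra hcon
    push_neg at hcon
    set S : Set (List D → J → ℝ) := {x | ∀ ds, x ds ∈ stdSimplex ℝ J} with hS_def
    have hScomp : IsCompact S := isCompact_pi_infinite fun _ => isCompact_stdSimplex ℝ J
    have hSclosed : IsClosed S := hScomp.isClosed
    -- strategy associated to a point of S
    have hτ : ∀ x ∈ S, ∃ τ : Strategy2 J D, (fun ds => (τ ds).f) = x := by
      intro x hx
      exact ⟨fun ds => ⟨x ds, (hx ds).1, (hx ds).2⟩, rfl⟩
    set A : ℕ → Set (List D → J → ℝ) :=
      fun N => S ∩ {x | reachX G δu σ x N ≤ 1 - ε} with hA_def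
    have hAcomp : ∀ N, IsCompact (A N) :=
      fun N => hScomp.inter_right (isClosed_le (continuous_reachX G δu σ N) continuous_const)
    have hAclosed : ∀ N, IsClosed (A N) :=
      fun N => hSclosed.inter (isClosed_le (continuous_reachX G δu σ N) continuous_const)
    have hAne : ∀ N, (A N).Nonempty := by
      intro N
      obtain ⟨τ, hτN⟩ := hcon N
      refine ⟨fun ds => (τ ds).f, fun ds => ⟨(τ ds).nonneg, (τ ds).sum_one⟩, ?_⟩
      rw [Set.mem_setOf_eq, reachX_eq]
      exact hτN.le
    have hAmono : ∀ {M N : ℕ}, M ≤ N → A N ⊆ A M := by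
      intro M N hMN x hx
      obtain ⟨τ, hτx⟩ := hτ x hx.1
      refine ⟨hx.1, ?_⟩
      rw [Set.mem_setOf_eq, ← hτx, reachX_eq]
      calc G.reachProb δu σ τ M ≤ G.reachProb δu σ τ N := reachProb_mono G δu σ τ hMN
        _ = reachX G δu σ x N := by rw [← hτx, reachX_eq]
        _ ≤ 1 - ε := hx.2
    have hAdir : Directed (· ⊇ ·) A := fun M N =>
      ⟨max M N, hAmono (le_max_left M N), hAmono (le_max_right M N)⟩
    obtain ⟨x, hx⟩ := IsCompact.nonempty_iInter_of_directed_nonempty_isCompact_isClosed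
      A hAdir hAne hAcomp hAclosed
    have hxS : x ∈ S := (Set.mem_iInter.mp hx 0).1
    obtain ⟨τ, hτx⟩ := hτ x hxS
    have hval : G.val δu σ τ ≤ 1 - ε := by
      refine ciSup_le fun N => ?_
      have := (Set.mem_iInter.mp hx N).2
      rwa [Set.mem_setOf_eq, ← hτx, reachX_eq] at this
    have h1 : G.val δu σ τ = 1 := hAS δu hδusupp τ
    rw [h1] at hval
    linarith
  obtain ⟨N, hN⟩ := step1
  refine ⟨N, fun δ hδ τ => ?_⟩
  set R : K → ℝ := fun k => G.reachProb (dirac k) σ τ N with hR_def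
  have hR0 : ∀ k, 0 ≤ R k := fun k => reachProb_nonneg G (dirac k) σ τ N
  have hR1 : ∀ k, R k ≤ 1 := fun k => reachProb_le_one G (dirac k) σ τ N
  have hu : 1 - ε ≤ ∑ k : K, δu.f k * R k := by
    rw [← reachProb_linear]
    exact hN τ
  -- every state of L has conditional reach probability at least 1/2
  have hkey : ∀ k ∈ L, 1 / 2 ≤ R k := by
    intro k0 hk0
    have hsum : ∑ k : K, δu.f k * R k = ∑ k ∈ L, m⁻¹ * R k := by
      rw [← Finset.sum_filter_add_sum_filter_not Finset.univ (fun k => k ∈ L)]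
      have h2 : ∑ k ∈ Finset.univ.filter (fun k => k ∉ L), δu.f k * R k = 0 := by
        refine Finset.sum_eq_zero fun k hk => ?_
        rw [Finset.mem_filter] at hk
        simp [hδu_def, uniform, hk.2]
      rw [h2, add_zero]
      refine Finset.sum_congr (by ext k; simp) fun k hk => ?_
      simp [hδu_def, uniform, hk, hm_def]
    rw [hsum] at hu
    have hsplit : ∑ k ∈ L, m⁻¹ * R k = m⁻¹ * R k0 + ∑ k ∈ L.erase k0, m⁻¹ * R k := by
      exact (Finset.add_sum_erase L (fun k => m⁻¹ * R k) hk0).symm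
    have herase : ∑ k ∈ L.erase k0, m⁻¹ * R k ≤ (m - 1) * m⁻¹ := by
      have hcard : ((L.erase k0).card : ℝ) = m - 1 := by
        rw [Finset.card_erase_of_mem hk0, hm_def]
        have := Finset.card_pos.mpr hL
        push_cast [Nat.cast_sub this]
        ring
      calc ∑ k ∈ L.erase k0, m⁻¹ * R k ≤ ∑ k ∈ L.erase k0, m⁻¹ * 1 :=
            Finset.sum_le_sum fun k _ => by
              have := hR1 k
              have h0 : (0:ℝ) ≤ m⁻¹ := by positivity
              nlinarith [hR0 k]
        _ = ((L.erase k0).card : ℝ) * m⁻¹ := by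
            rw [Finset.sum_const, mul_one, nsmul_eq_mul]
        _ = (m - 1) * m⁻¹ := by rw [hcard]
    have hinv : m * m⁻¹ = 1 := mul_inv_cancel₀ hm.ne'
    have hstep : 1 - ε - (m - 1) * m⁻¹ ≤ m⁻¹ * R k0 := by linarith
    have := mul_le_mul_of_nonneg_left hstep hm.le
    nlinarith [this, hinv, hmε]
  -- conclude for an arbitrary δ with support L
  have hδ0 : ∀ k, k ∉ L → δ.f k = 0 := by
    intro k hk
    by_contra h0
    have hpos : 0 < δ.f k := lt_of_le_of_ne (δ.nonneg k) (Ne.symm h0)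
    have : k ∈ δ.support := Finset.mem_filter.mpr ⟨Finset.mem_univ k, hpos⟩
    rw [hδ] at this
    exact hk this
  rw [reachProb_linear]
  calc (1:ℝ)/2 = ∑ k : K, δ.f k * (1/2) := by
        rw [← Finset.sum_mul, δ.sum_one, one_mul]
    _ ≤ ∑ k : K, δ.f k * R k := by
        refine Finset.sum_le_sum fun k _ => ?_
        by_cases hkL : k ∈ L
        · exact mul_le_mul_of_nonneg_left (hkey k hkL) (δ.nonneg k)
        · rw [hδ0 k hkL, zero_mul, zero_mul]
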